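/- For every $n\in\mathbb N$, the restriction map $r_n|_{M_n}$ is injective, its image is $r_n(M_n)=f(s_n B_{\ell_\infty(\Gamma_n)})$, and the inverse map $(r_n|_{M_n})^{-1}:f(s_n B_{\ell_\infty(\Gamma_n)})\to M_n$ is $(3\lambda+2)$-Lipschitz. -/

import Mathlib

open Set

noncomputable section

variable {Γ : Type*} [TopologicalSpace Γ] [DiscreteTopology Γ]

/-- `ℓ∞(Γ)`: the Banach space of bounded real functions on `Γ`
(carrying the discrete topology, so that boundedness is the only constraint). -/
abbrev Linf (Γ : Type*) [TopologicalSpace Γ] [DiscreteTopology Γ] : Type _ :=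
  BoundedContinuousFunction Γ ℝ

/-- The entire part of a real number, toward `0`: `[r] = sign(r)⌊|r|⌋`. -/
def ent (r : ℝ) : ℝ := Real.sign r * ⌊|r|⌋

lemma abs_ent_le (r : ℝ) : |ent r| ≤ |r| := by
  have hsign : |Real.sign r| ≤ 1 := by
    rcases lt_trichotomy r 0 with h | h | h
    · rw [Real.sign_of_neg h]; norm_num
    · rw [h, Real.sign_zero]; norm_num
    · rw [Real.sign_of_pos h]; norm_num
  have hfl : |(⌊|r|⌋ : ℝ)| ≤ |r| := by
    rw [abs_of_nonneg (by exact_mod_cast Int.floor_nonneg.mpr (abs_nonneg r))]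
    exact Int.floor_le _
  calc |ent r| = |Real.sign r| * |(⌊|r|⌋ : ℝ)| := abs_mul _ _
    _ ≤ 1 * |r| := mul_le_mul hsign hfl (abs_nonneg _) zero_le_one
    _ = |r| := one_mul _

/-- The coordinatewise quantization `f : ℓ∞(S) → ℓ∞(S)`, `f(x)(γ) = [x(γ)]`. -/
def quant (x : Linf Γ) : Linf Γ :=
  BoundedContinuousFunction.ofNormedAddCommGroup (fun γ => ent (x γ))
    continuous_of_discreteTopology ‖x‖ (fun γ => by
      rw [Real.norm_eq_abs]
      exact (abs_ent_le (x γ)).trans (by simpa using x.norm_coe_le_norm γ))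

/-- Scalar truncation at level `s`. -/
def truncFun (s t : ℝ) : ℝ := if |t| ≤ s then t else s * t / |t|

lemma abs_truncFun_le (s t : ℝ) : |truncFun s t| ≤ max |s| |t| := by
  unfold truncFun
  split_ifs with h
  · exact le_max_right _ _
  · by_cases ht : t = 0
    · simp [ht]
    · have hst : abs (s * t / |t|) = |s| := by
        rw [abs_div, abs_mul, abs_abs, mul_div_assoc, div_self (abs_ne_zero.mpr ht), mul_one]
      rw [hst]; exact le_max_left _ _

/-- The truncation of radius `s`: `T_s(x)(γ) = x(γ)` if `|x(γ)| ≤ s`,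
and `= s·x(γ)/|x(γ)|` otherwise. -/
def trunc (s : ℝ) (x : Linf Γ) : Linf Γ :=
  BoundedContinuousFunction.ofNormedAddCommGroup (fun γ => truncFun s (x γ))
    continuous_of_discreteTopology (max |s| ‖x‖) (fun γ => by
      rw [Real.norm_eq_abs]
      exact (abs_truncFun_le s (x γ)).trans
        (max_le_max le_rfl (by simpa using x.norm_coe_le_norm γ)))

/-- The restriction operator `r_S : ℓ∞(Γ) → ℓ∞(S)`, where `ℓ∞(S)` is identified
isometrically with the subspace of `ℓ∞(Γ)` of functions vanishing off `S`. -/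
def restr (S : Set Γ) (x : Linf Γ) : Linf Γ :=
  BoundedContinuousFunction.ofNormedAddCommGroup (S.indicator x)
    continuous_of_discreteTopology ‖x‖ (fun γ => by
      rw [Real.norm_eq_abs]
      by_cases h : γ ∈ S
      · rw [Set.indicator_of_mem h]
        simpa using x.norm_coe_le_norm γ
      · rw [Set.indicator_of_notMem h]
        simp)

/-- The ball `s·B_{ℓ∞(S)}`, viewed inside `ℓ∞(Γ)`: functions supported on `S`
of norm at most `s`. -/
def suppBall (S : Set Γ) (s : ℝ) : Set (Linf Γ) :=
  {x | (∀ γ ∉ S, x γ = 0) ∧ ‖x‖ ≤ s}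

/-- `chain T a b = T (a+1) ∘ ⋯ ∘ T b` (the identity if `b ≤ a`). -/
def chain {α : Type*} (T : ℕ → α → α) (a b : ℕ) : α → α :=
  Nat.rec id (fun k ih => ih ∘ T (a + k + 1)) (b - a)

/-- Bourgain–Delbaen data on `Γ`: a strictly increasing sequence of nonempty finite
sets `Γs n` (for `n ≥ 1`) with union `Γ`, together with compatible bounded linear
extension operators `i n : ℓ∞(Γ_n) → ℓ∞(Γ)` (realized as operators on `ℓ∞(Γ)`
factoring through the restriction `restr (Γs n)`), with norms bounded by the
positive integer `lam`. -/
structure BD (Γ : Type*) [TopologicalSpace Γ] [DiscreteTopology Γ] where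
  Γs : ℕ → Set Γ
  lam : ℕ
  i : ℕ → Linf Γ →L[ℝ] Linf Γ
  one_le_lam : 1 ≤ lam
  finite : ∀ n, 1 ≤ n → (Γs n).Finite
  nonempty : ∀ n, 1 ≤ n → (Γs n).Nonempty
  ssubset : ∀ n, 1 ≤ n → Γs n ⊂ Γs (n + 1)
  iUnion_eq : ⋃ n ∈ {k : ℕ | 1 ≤ k}, Γs n = Set.univ
  extension : ∀ n, 1 ≤ n → ∀ x : Linf Γ, ∀ γ ∈ Γs n, i n x γ = x γ
  factor : ∀ n, 1 ≤ n → ∀ x : Linf Γ, i n (restr (Γs n) x) = i n x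
  compatible : ∀ n m, 1 ≤ n → n < m → ∀ x : Linf Γ, i m (restr (Γs m) (i n x)) = i n x
  norm_i_le : ∀ n, 1 ≤ n → ‖i n‖ ≤ (lam : ℝ)

namespace BD

/-- `s n = λ^n`. -/
def s (B : BD Γ) (n : ℕ) : ℝ := (B.lam : ℝ) ^ n

/-- The sets `M_n` (with `M_0 = ∅`):
`M_n = M_{n-1} ∪ (f ∘ i_n)(f(s_n B_{ℓ∞(Γ_n)}) \ r_n(M_{n-1}))`. -/
def M (B : BD Γ) : ℕ → Set (Linf Γ)
  | 0 => ∅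
  | n + 1 =>
      M B n ∪
        (fun z => quant (B.i (n + 1) z)) ''
          (quant '' suppBall (B.Γs (n + 1)) (B.s (n + 1)) \ restr (B.Γs (n + 1)) '' M B n)

/-- `M = ⋃ n, M_n`. -/
def Mtot (B : BD Γ) : Set (Linf Γ) := ⋃ n, B.M n

/-- `C_n = (f ∘ i_{n+1} ∘ f ∘ T_{s_{n+1}} ∘ r_{n+1} ∘ i_n)
(f(s_{n+1}B_{ℓ∞(Γ_n)}) \ f(s_n B_{ℓ∞(Γ_n)}))`. -/
def C (B : BD Γ) (n : ℕ) : Set (Linf Γ) :=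
  (fun z => quant (B.i (n + 1) (quant (trunc (B.s (n + 1)) (restr (B.Γs (n + 1)) (B.i n z)))))) ''
    (quant '' suppBall (B.Γs n) (B.s (n + 1)) \ quant '' suppBall (B.Γs n) (B.s n))

/-- `D_n = M_n ∪ C_n`. -/
def D (B : BD Γ) (n : ℕ) : Set (Linf Γ) := B.M n ∪ B.C n

end BD

section Helpers

lemma ent_intCast (m : ℤ) : ent (m : ℝ) = m := by
  unfold ent
  rcases lt_trichotomy ((m : ℝ)) 0 with h|h|h
  · rw [Real.sign_of_neg h, abs_of_neg h]
    rw [show -((m:ℝ)) = ((-m : ℤ) : ℝ) by push_cast; ring, Int.floor_intCast]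
    push_cast; ring
  · have : m = 0 := by exact_mod_cast h
    simp [this]
  · rw [Real.sign_of_pos h, abs_of_pos h, Int.floor_intCast, one_mul]

lemma ent_isInt (r : ℝ) : ∃ m : ℤ, ent r = m := by
  unfold ent
  rcases lt_trichotomy r 0 with h|h|h
  · exact ⟨-⌊|r|⌋, by rw [Real.sign_of_neg h]; push_cast; ring⟩
  · exact ⟨0, by simp [h]⟩
  · exact ⟨⌊|r|⌋, by rw [Real.sign_of_pos h, one_mul]⟩

lemma abs_ent_sub_lt (r : ℝ) : |ent r - r| < 1 := by
  unfold ent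
  rcases lt_trichotomy r 0 with h|h|h
  · rw [Real.sign_of_neg h, abs_of_neg h]
    have h1 := Int.sub_one_lt_floor (-r)
    have h2 := Int.floor_le (-r)
    rw [abs_sub_lt_iff]; constructor <;> nlinarith
  · simp [h]
  · rw [Real.sign_of_pos h, abs_of_pos h, one_mul]
    have h1 := Int.sub_one_lt_floor r
    have h2 := Int.floor_le r
    rw [abs_sub_lt_iff]; constructor <;> linarith

lemma quant_apply (x : Linf Γ) (γ : Γ) : quant x γ = ent (x γ) := rfl

lemma restr_apply (S : Set Γ) (x : Linf Γ) (γ : Γ) : restr S x γ = S.indicator x γ := rfl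

lemma Linf.norm_le' {x : Linf Γ} {c : ℝ} (hc : 0 ≤ c) : ‖x‖ ≤ c ↔ ∀ γ, |x γ| ≤ c := by
  exact (BoundedContinuousFunction.norm_le hc).trans (forall_congr' fun γ => Iff.rfl)

lemma Linf.abs_le_norm (x : Linf Γ) (γ : Γ) : |x γ| ≤ ‖x‖ := by
  simpa [Real.norm_eq_abs] using x.norm_coe_le_norm γ

end Helpers

section Helpers2

/-- Integer-valued elements. -/
def IsIntValued (x : Linf Γ) : Prop := ∀ γ, ∃ m : ℤ, x γ = m

lemma restr_sub (S : Set Γ) (x y : Linf Γ) : restr S (x - y) = restr S x - restr S y := by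
  ext γ
  simp only [BoundedContinuousFunction.coe_sub, Pi.sub_apply, restr_apply]
  by_cases h : γ ∈ S <;>
    simp [Set.indicator_of_mem, Set.indicator_of_notMem, h]

lemma norm_restr_le (S : Set Γ) (x : Linf Γ) : ‖restr S x‖ ≤ ‖x‖ := by
  rw [Linf.norm_le' (norm_nonneg x)]
  intro γ
  rw [restr_apply]
  by_cases h : γ ∈ S
  · rw [Set.indicator_of_mem h]; exact Linf.abs_le_norm x γ
  · rw [Set.indicator_of_notMem h]; simpa using norm_nonneg x

lemma restr_restr {S T : Set Γ} (h : S ⊆ T) (x : Linf Γ) :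
    restr S (restr T x) = restr S x := by
  ext γ
  simp only [restr_apply]
  by_cases hγ : γ ∈ S
  · rw [Set.indicator_of_mem hγ, Set.indicator_of_mem hγ, restr_apply,
      Set.indicator_of_mem (h hγ)]
  · rw [Set.indicator_of_notMem hγ, Set.indicator_of_notMem hγ]

lemma norm_quant_le (x : Linf Γ) : ‖quant x‖ ≤ ‖x‖ := by
  rw [Linf.norm_le' (norm_nonneg x)]
  intro γ
  rw [quant_apply]
  exact (abs_ent_le _).trans (Linf.abs_le_norm x γ)

lemma quant_isIntValued (x : Linf Γ) : IsIntValued (quant x) := fun γ => ent_isInt (x γ)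

lemma restr_isIntValued {x : Linf Γ} (S : Set Γ) (hx : IsIntValued x) :
    IsIntValued (restr S x) := by
  intro γ
  rw [restr_apply]
  by_cases h : γ ∈ S
  · rw [Set.indicator_of_mem h]; exact hx γ
  · rw [Set.indicator_of_notMem h]; exact ⟨0, by simp⟩

lemma quant_eq_self {x : Linf Γ} (hx : IsIntValued x) : quant x = x := by
  ext γ
  rw [quant_apply]
  obtain ⟨m, hm⟩ := hx γ
  rw [hm, ent_intCast]

lemma mem_quant_image_suppBall {S : Set Γ} {s : ℝ} {x : Linf Γ} :
    x ∈ quant '' suppBall S s ↔ IsIntValued x ∧ (∀ γ ∉ S, x γ = 0) ∧ ‖x‖ ≤ s := by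
  constructor
  · rintro ⟨w, ⟨hw0, hws⟩, rfl⟩
    refine ⟨quant_isIntValued w, fun γ hγ => ?_, (norm_quant_le w).trans hws⟩
    rw [quant_apply, hw0 γ hγ]
    simp [ent]
  · rintro ⟨hint, h0, hs⟩
    exact ⟨x, ⟨h0, hs⟩, quant_eq_self hint⟩

lemma one_le_norm_sub {x y : Linf Γ} (hx : IsIntValued x) (hy : IsIntValued y)
    (hne : x ≠ y) : 1 ≤ ‖x - y‖ := by
  have : ∃ γ, x γ ≠ y γ := by
    by_contra h
    push_neg at h
    exact hne (BoundedContinuousFunction.ext h)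
  obtain ⟨γ, hγ⟩ := this
  obtain ⟨m, hm⟩ := hx γ
  obtain ⟨m', hm'⟩ := hy γ
  have h1 : (1:ℝ) ≤ |x γ - y γ| := by
    rw [hm, hm']
    rw [show ((m:ℝ) - m') = ((m - m' : ℤ) : ℝ) by push_cast; ring]
    rw [show |((m - m' : ℤ) : ℝ)| = ((|m - m'| : ℤ) : ℝ) by push_cast; simp]
    have hmm : m ≠ m' := by rintro rfl; exact hγ (hm.trans hm'.symm)
    exact_mod_cast Int.one_le_abs (by omega : m - m' ≠ 0)
  calc (1:ℝ) ≤ |x γ - y γ| := h1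
    _ = |(x - y) γ| := by simp
    _ ≤ ‖x - y‖ := Linf.abs_le_norm _ γ

lemma norm_sub_le_of_int {x y : Linf Γ} (hx : IsIntValued x) (hy : IsIntValued y)
    {c : ℤ} (hc : (0:ℝ) ≤ c) (h : ∀ γ, |x γ - y γ| < c + 1) : ‖x - y‖ ≤ c := by
  rw [Linf.norm_le' hc]
  intro γ
  obtain ⟨m, hm⟩ := hx γ
  obtain ⟨m', hm'⟩ := hy γ
  have hlt : |x γ - y γ| < c + 1 := h γ
  have hgoal : |(x - y) γ| = |x γ - y γ| := by norm_num
  rw [hgoal, hm, hm']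
  rw [hm, hm'] at hlt
  rw [show ((m:ℝ) - m') = ((m - m' : ℤ) : ℝ) by push_cast; ring] at hlt ⊢
  rw [show |((m - m' : ℤ) : ℝ)| = ((|m - m'| : ℤ) : ℝ) by push_cast; simp] at hlt ⊢
  have : |m - m'| < c + 1 := by exact_mod_cast hlt
  exact_mod_cast (by omega : |m - m'| ≤ c)

lemma norm_quant_sub_quant_le (u v : Linf Γ) : ‖quant u - quant v‖ ≤ ‖u - v‖ + 2 := by
  rw [Linf.norm_le' (by positivity)]
  intro γ
  rw [BoundedContinuousFunction.coe_sub, Pi.sub_apply, quant_apply, quant_apply]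
  have h1 := abs_ent_sub_lt (u γ)
  have h2 := abs_ent_sub_lt (v γ)
  have h3 : |u γ - v γ| ≤ ‖u - v‖ := by
    simpa using Linf.abs_le_norm (u - v) γ
  calc |ent (u γ) - ent (v γ)|
      ≤ |ent (u γ) - u γ| + |u γ - v γ| + |v γ - ent (v γ)| := by
        have := abs_sub_abs_le_abs_sub (ent (u γ)) (ent (v γ))
        calc |ent (u γ) - ent (v γ)| = |(ent (u γ) - u γ) + (u γ - v γ) + (v γ - ent (v γ))| := by ring_nf
          _ ≤ |ent (u γ) - u γ| + |u γ - v γ| + |v γ - ent (v γ)| := by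
              exact (abs_add_le _ _).trans (add_le_add_left (abs_add_le _ _) _)
    _ ≤ ‖u - v‖ + 2 := by rw [abs_sub_comm (v γ)]; linarith

end Helpers2

namespace BD

variable (B : BD Γ)

lemma one_le_lam_real : (1:ℝ) ≤ (B.lam : ℝ) := by exact_mod_cast B.one_le_lam

lemma s_nonneg (n : ℕ) : 0 ≤ B.s n := by
  unfold s; positivity

lemma s_mono {n m : ℕ} (h : n ≤ m) : B.s n ≤ B.s m :=
  pow_le_pow_right₀ (B.one_le_lam_real) h

lemma norm_i_apply_le {n : ℕ} (hn : 1 ≤ n) (u : Linf Γ) :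
    ‖B.i n u‖ ≤ (B.lam : ℝ) * ‖u‖ :=
  ((B.i n).le_opNorm u).trans
    (mul_le_mul_of_nonneg_right (B.norm_i_le n hn) (norm_nonneg u))

lemma M_struct : ∀ n, ∀ x ∈ B.M n, ∃ k y, 1 ≤ k ∧ k ≤ n ∧
    (∀ γ ∉ B.Γs k, y γ = 0) ∧ ‖y‖ ≤ B.s k ∧ IsIntValued y ∧ x = quant (B.i k y) := by
  intro n
  induction n with
  | zero => intro x hx; simp [BD.M] at hx
  | succ n ih =>
    intro x hx
    rcases hx with hx | ⟨z, ⟨hzQ, _⟩, rfl⟩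
    · obtain ⟨k, y, hk1, hkn, h⟩ := ih x hx
      exact ⟨k, y, hk1, hkn.trans (Nat.le_succ n), h⟩
    · rw [mem_quant_image_suppBall] at hzQ
      exact ⟨n + 1, z, Nat.le_add_left 1 n, le_rfl, hzQ.2.1, hzQ.2.2, hzQ.1, rfl⟩

lemma M_isIntValued {n : ℕ} {x : Linf Γ} (hx : x ∈ B.M n) : IsIntValued x := by
  obtain ⟨k, y, _, _, _, _, _, rfl⟩ := B.M_struct n x hx
  exact quant_isIntValued _

lemma M_norm_le {n : ℕ} {x : Linf Γ} (hx : x ∈ B.M n) : ‖x‖ ≤ B.s (n + 1) := by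
  obtain ⟨k, y, hk1, hkn, _, hys, _, rfl⟩ := B.M_struct n x hx
  calc ‖quant (B.i k y)‖ ≤ ‖B.i k y‖ := norm_quant_le _
    _ ≤ (B.lam : ℝ) * ‖y‖ := B.norm_i_apply_le hk1 y
    _ ≤ (B.lam : ℝ) * B.s k := by
        exact mul_le_mul_of_nonneg_left hys (by positivity)
    _ = B.s (k + 1) := by unfold s; ring
    _ ≤ B.s (n + 1) := B.s_mono (by omega)

lemma restr_M_mem_Q {n : ℕ} {x : Linf Γ} (hx : x ∈ B.M n) :
    restr (B.Γs (n + 1)) x ∈ quant '' suppBall (B.Γs (n + 1)) (B.s (n + 1)) := by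
  rw [mem_quant_image_suppBall]
  refine ⟨restr_isIntValued _ (B.M_isIntValued hx), fun γ hγ => ?_,
    (norm_restr_le _ _).trans (B.M_norm_le hx)⟩
  rw [restr_apply, Set.indicator_of_notMem hγ]

lemma restr_quant_i {n : ℕ} (hn : 1 ≤ n) {z : Linf Γ}
    (hz0 : ∀ γ ∉ B.Γs n, z γ = 0) (hint : IsIntValued z) :
    restr (B.Γs n) (quant (B.i n z)) = z := by
  ext γ
  rw [restr_apply]
  by_cases h : γ ∈ B.Γs n
  · rw [Set.indicator_of_mem h, quant_apply, B.extension n hn z γ h]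
    obtain ⟨m, hm⟩ := hint γ
    rw [hm, ent_intCast]
  · rw [Set.indicator_of_notMem h, hz0 γ h]

/-- Key estimate: for `x ∈ M_n` and `m > n`,
`‖x - f(i_m(r_m x))‖ ≤ λ + 1`. -/
lemma dist_quant_i_restr {n m : ℕ} (hm : n < m) {x : Linf Γ} (hx : x ∈ B.M n) :
    ‖x - quant (B.i m (restr (B.Γs m) x))‖ ≤ (B.lam : ℝ) + 1 := by
  obtain ⟨k, y, hk1, hkn, hy0, hys, hyint, rfl⟩ := B.M_struct n x hx
  set w : Linf Γ := B.i k y with hw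
  set x : Linf Γ := quant w with hxdef
  set z : Linf Γ := restr (B.Γs m) x with hz
  have hcompat : B.i m (restr (B.Γs m) w) = w := B.compatible k m hk1 (by omega) y
  have h1 : ‖z - restr (B.Γs m) w‖ ≤ 1 := by
    rw [← restr_sub]
    rw [Linf.norm_le' zero_le_one]
    intro γ
    rw [restr_apply]
    by_cases h : γ ∈ B.Γs m
    · rw [Set.indicator_of_mem h]
      have : (x - w) γ = ent (w γ) - w γ := by
        simp [hxdef, quant_apply]
      rw [this]
      exact (abs_ent_sub_lt (w γ)).le
    · rw [Set.indicator_of_notMem h]; simp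
  have h3 : ‖B.i m z - w‖ ≤ (B.lam : ℝ) := by
    calc ‖B.i m z - w‖ = ‖B.i m (z - restr (B.Γs m) w)‖ := by
          rw [map_sub, hcompat]
      _ ≤ (B.lam : ℝ) * ‖z - restr (B.Γs m) w‖ := B.norm_i_apply_le (by omega) _
      _ ≤ (B.lam : ℝ) * 1 := mul_le_mul_of_nonneg_left h1 (by positivity)
      _ = (B.lam : ℝ) := mul_one _
  have hxint : IsIntValued x := quant_isIntValued w
  have hqint : IsIntValued (quant (B.i m z)) := quant_isIntValued _
  have key : ‖x - quant (B.i m z)‖ ≤ ((B.lam + 1 : ℤ) : ℝ) := by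
    refine norm_sub_le_of_int hxint hqint (by push_cast; positivity) (fun γ => ?_)
    have e1 : |x γ - w γ| < 1 := by
      rw [hxdef, quant_apply]; exact abs_ent_sub_lt (w γ)
    have e2 : |w γ - B.i m z γ| ≤ (B.lam : ℝ) := by
      rw [show w γ - B.i m z γ = -((B.i m z - w) γ) by simp]
      rw [abs_neg]
      exact (Linf.abs_le_norm _ γ).trans h3
    have e3 : |B.i m z γ - ent (B.i m z γ)| < 1 := by
      rw [abs_sub_comm]; exact abs_ent_sub_lt _
    have hq : quant (B.i m z) γ = ent (B.i m z γ) := rfl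
    have : x γ - quant (B.i m z) γ =
        (x γ - w γ) + (w γ - B.i m z γ) + (B.i m z γ - ent (B.i m z γ)) := by
      rw [hq]; ring
    rw [this]
    calc |(x γ - w γ) + (w γ - B.i m z γ) + (B.i m z γ - ent (B.i m z γ))|
        ≤ |x γ - w γ| + |w γ - B.i m z γ| + |B.i m z γ - ent (B.i m z γ)| :=
          (abs_add_le _ _).trans (add_le_add_left (abs_add_le _ _) _)
      _ < ((B.lam + 1 : ℤ) : ℝ) + 1 := by push_cast; linarith
  calc ‖x - quant (B.i m z)‖ ≤ ((B.lam + 1 : ℤ) : ℝ) := key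
    _ = (B.lam : ℝ) + 1 := by push_cast; ring

end BD

namespace BD

variable (B : BD Γ)

lemma quant_i_lip {m : ℕ} (hm : 1 ≤ m) (z z' : Linf Γ) :
    ‖quant (B.i m z) - quant (B.i m z')‖ ≤ (B.lam : ℝ) * ‖z - z'‖ + 2 := by
  calc ‖quant (B.i m z) - quant (B.i m z')‖
      ≤ ‖B.i m z - B.i m z'‖ + 2 := norm_quant_sub_quant_le _ _
    _ = ‖B.i m (z - z')‖ + 2 := by rw [map_sub]
    _ ≤ (B.lam:ℝ) * ‖z - z'‖ + 2 := by linarith [B.norm_i_apply_le hm (z - z')]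

lemma mem_M_pos {n : ℕ} {x : Linf Γ} (hx : x ∈ B.M n) : 1 ≤ n := by
  cases n with
  | zero => simp [BD.M] at hx
  | succ n => omega

lemma M_succ_eq (n : ℕ) : B.M (n+1) = B.M n ∪
    (fun z => quant (B.i (n + 1) z)) ''
      (quant '' suppBall (B.Γs (n + 1)) (B.s (n + 1)) \ restr (B.Γs (n + 1)) '' B.M n) := rfl

lemma recov {n : ℕ} {z : Linf Γ}
    (hz : z ∈ quant '' suppBall (B.Γs (n+1)) (B.s (n+1))) :
    restr (B.Γs (n+1)) (quant (B.i (n+1) z)) = z := by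
  rw [mem_quant_image_suppBall] at hz
  exact B.restr_quant_i (Nat.le_add_left 1 n) hz.2.1 hz.1

lemma main_ind : ∀ n : ℕ,
    Set.InjOn (restr (B.Γs n)) (B.M n) ∧
    (∀ x ∈ B.M n, ∀ y ∈ B.M n,
      ‖x - y‖ ≤ (3 * (B.lam : ℝ) + 2) * ‖restr (B.Γs n) x - restr (B.Γs n) y‖) := by
  intro n
  induction n with
  | zero =>
    constructor
    · intro x hx; simp [BD.M] at hx
    · intro x hx; simp [BD.M] at hx
  | succ n ih =>
    obtain ⟨ihinj, ihlip⟩ := ih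
    set S := B.Γs (n+1) with hS
    have hlam := B.one_le_lam_real
    -- the mixed-case Lipschitz bound
    have hmix : ∀ x ∈ B.M n,
        ∀ z' ∈ (quant '' suppBall S (B.s (n+1))) \ restr S '' B.M n,
        ‖x - quant (B.i (n+1) z')‖ ≤
          (3*(B.lam:ℝ)+2) * ‖restr S x - restr S (quant (B.i (n+1) z'))‖ := by
      intro x hx z' hz'
      have hz'int : IsIntValued z' := (mem_quant_image_suppBall.mp hz'.1).1
      set z : Linf Γ := restr S x with hzdef
      have hzint : IsIntValued z := restr_isIntValued _ (B.M_isIntValued hx)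
      have hne : z ≠ z' := fun h => hz'.2 ⟨x, hx, h⟩
      have hsep : 1 ≤ ‖z - z'‖ := one_le_norm_sub hzint hz'int hne
      rw [B.recov hz'.1]
      have h1 : ‖x - quant (B.i (n+1) z)‖ ≤ (B.lam:ℝ) + 1 :=
        B.dist_quant_i_restr (Nat.lt_succ_self n) hx
      have h2 := B.quant_i_lip (Nat.le_add_left 1 n) z z'
      calc ‖x - quant (B.i (n+1) z')‖
          ≤ ‖x - quant (B.i (n+1) z)‖ +
            ‖quant (B.i (n+1) z) - quant (B.i (n+1) z')‖ := by
            have := norm_add_le (x - quant (B.i (n+1) z))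
              (quant (B.i (n+1) z) - quant (B.i (n+1) z'))
            simpa using this
        _ ≤ ((B.lam:ℝ)+1) + ((B.lam:ℝ) * ‖z - z'‖ + 2) := by linarith
        _ ≤ (3*(B.lam:ℝ)+2) * ‖z - z'‖ := by nlinarith
    constructor
    · -- injectivity
      rintro x hx x' hx' heq
      rcases hx with hx | ⟨z, hz, rfl⟩ <;> rcases hx' with hx' | ⟨z', hz', rfl⟩
      · have hn1 : 1 ≤ n := B.mem_M_pos hx
        have hsub : B.Γs n ⊆ S := (B.ssubset n hn1).1
        apply ihinj hx hx'
        rw [← restr_restr hsub x, ← restr_restr hsub x', heq]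
      · exact absurd ⟨x, hx, heq.trans (B.recov hz'.1)⟩ hz'.2
      · exact absurd ⟨x', hx', (heq.symm.trans (B.recov hz.1))⟩ hz.2
      · have : z = z' := by
          rw [← B.recov hz.1, ← B.recov hz'.1]
          exact heq
        rw [this]
    · -- Lipschitz
      intro x hx x' hx'
      rcases hx with hx | ⟨z, hz, rfl⟩ <;> rcases hx' with hx' | ⟨z', hz', rfl⟩
      · have hn1 : 1 ≤ n := B.mem_M_pos hx
        have hsub : B.Γs n ⊆ S := (B.ssubset n hn1).1
        have h := ihlip x hx x' hx'
        have h2 : ‖restr (B.Γs n) x - restr (B.Γs n) x'‖ ≤ ‖restr S x - restr S x'‖ := by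
          rw [← restr_sub, ← restr_sub, ← restr_restr hsub (x - x')]
          exact norm_restr_le _ _
        have hc : (0:ℝ) ≤ 3*(B.lam:ℝ)+2 := by positivity
        calc ‖x - x'‖ ≤ (3*(B.lam:ℝ)+2) * ‖restr (B.Γs n) x - restr (B.Γs n) x'‖ := h
          _ ≤ (3*(B.lam:ℝ)+2) * ‖restr S x - restr S x'‖ :=
            mul_le_mul_of_nonneg_left h2 hc
      · exact hmix x hx z' hz'
      · calc ‖quant (B.i (n+1) z) - x'‖ = ‖x' - quant (B.i (n+1) z)‖ := norm_sub_rev _ _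
          _ ≤ (3*(B.lam:ℝ)+2) * ‖restr S x' - restr S (quant (B.i (n+1) z))‖ :=
              hmix x' hx' z hz
          _ = (3*(B.lam:ℝ)+2) * ‖restr S (quant (B.i (n+1) z)) - restr S x'‖ := by
              rw [norm_sub_rev]
      · by_cases hzz : z = z'
        · rw [hzz]; simp
        · have hzint : IsIntValued z := (mem_quant_image_suppBall.mp hz.1).1
          have hz'int : IsIntValued z' := (mem_quant_image_suppBall.mp hz'.1).1
          have hsep := one_le_norm_sub hzint hz'int hzz
          have h2 := B.quant_i_lip (Nat.le_add_left 1 n) z z'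
          rw [B.recov hz.1, B.recov hz'.1]
          nlinarith [norm_nonneg (z - z')]

lemma image_M (n : ℕ) :
    restr (B.Γs (n+1)) '' B.M (n+1) = quant '' suppBall (B.Γs (n+1)) (B.s (n+1)) := by
  apply Set.Subset.antisymm
  · rintro _ ⟨x, hx, rfl⟩
    rcases hx with hx | ⟨z, hz, rfl⟩
    · exact B.restr_M_mem_Q hx
    · rw [B.recov hz.1]
      exact hz.1
  · intro z hz
    by_cases hzM : z ∈ restr (B.Γs (n+1)) '' B.M n
    · obtain ⟨x, hx, rfl⟩ := hzM
      exact ⟨x, Or.inl hx, rfl⟩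
    · exact ⟨quant (B.i (n+1) z), Or.inr ⟨z, ⟨hz, hzM⟩, rfl⟩, B.recov hz⟩

end BD

/-- Lemma 3 (`Lipmain1`): `r_n|_{M_n}` is injective with image `f(s_n B_{ℓ∞(Γ_n)})`,
and its inverse is `(3λ+2)`-Lipschitz. -/
theorem restr_injOn_M (B : BD Γ) (n : ℕ) (hn : 1 ≤ n) :
    Set.InjOn (restr (B.Γs n)) (B.M n) ∧
    restr (B.Γs n) '' B.M n = quant '' suppBall (B.Γs n) (B.s n) ∧
    (∀ x ∈ B.M n, ∀ y ∈ B.M n,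
      ‖x - y‖ ≤ (3 * (B.lam : ℝ) + 2) * ‖restr (B.Γs n) x - restr (B.Γs n) y‖) := by
  obtain ⟨m, rfl⟩ : ∃ m, n = m + 1 := ⟨n - 1, by omega⟩
  exact ⟨(B.main_ind (m+1)).1, B.image_M m, (B.main_ind (m+1)).2⟩
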